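/- Let C be a small category and J a Grothendieck topology on C. Then the following are equivalent: (i) for every object c of C and every sieve R on c, the sieve ¬R ⊔ ¬¬R is J-covering; (ii) for every presheaf E : Cᵒᵖ ⥤ Type and every subpresheaf A of E, the subpresheaf N(A) ⊔ N(N(A)) is J-dense in E. -/

import Mathlib

open CategoryTheory CategoryTheory.GrothendieckTopology Opposite

universe u

namespace Stmt11

variable {C : Type u} [SmallCategory C]

/-- The pseudocomplement `¬R` of a sieve `R` on `c`: the sieve of morphisms `f` with
codomain `c` whose pullback sieve `f*(R)` is empty. -/
def negSieve {c : C} (R : Sieve c) : Sieve c where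
  arrows := fun _ f => R.pullback f = ⊥
  downward_closed := by
    intro d e f hf g
    rw [Sieve.pullback_comp, hf]
    exact le_antisymm (fun Y h hh => hh) bot_le

/-- The subpresheaf `N(A)` of `E`, whose sections at `c` are the sections `e ∈ E(c)` such
that no restriction of `e` along any morphism lies in `A`. -/
def negSub (E : Cᵒᵖ ⥤ Type u) (A : Subfunctor E) : Subfunctor E where
  obj c := {e | ∀ (d : C) (f : d ⟶ unop c), E.map f.op e ∉ A.obj (op d)}
  map := by
    intro U V i e he d f hf
    apply he d (f ≫ i.unop)
    have : (f ≫ i.unop).op = i ≫ f.op := rfl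
    rw [this, FunctorToTypes.map_comp_apply] at *
    exact hf

/-- The union `A ⊔ B` of two subpresheaves of `E`. -/
def unionSub (E : Cᵒᵖ ⥤ Type u) (A B : Subfunctor E) : Subfunctor E where
  obj c := A.obj c ∪ B.obj c
  map := by
    intro U V i e he
    rcases he with h | h
    · exact Or.inl (A.map i h)
    · exact Or.inr (B.map i h)

lemma negSub_sieve (E : Cᵒᵖ ⥤ Type u) (A : Subfunctor E) {c : Cᵒᵖ} (e : E.obj c) :
    (negSub E A).sieveOfSection e = negSieve (A.sieveOfSection e) := by
  ext d f
  constructor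
  · intro h
    apply le_antisymm _ bot_le
    intro Y g hg
    exact absurd (by simpa [FunctorToTypes.map_comp_apply] using hg) (h Y g)
  · intro h Y g hg
    have : (A.sieveOfSection e).pullback f g := by
      simpa [FunctorToTypes.map_comp_apply] using hg
    rw [h] at this
    exact this

lemma unionSub_sieve (E : Cᵒᵖ ⥤ Type u) (A B : Subfunctor E) {c : Cᵒᵖ} (e : E.obj c) :
    (unionSub E A B).sieveOfSection e = A.sieveOfSection e ⊔ B.sieveOfSection e := by
  ext d f
  rfl

/-- `¬R ⊔ ¬¬R` is `J`-covering for every sieve `R` if and only if for every presheaf `E`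
and every subpresheaf `A` of `E`, the subpresheaf `N(A) ⊔ N(N(A))` is `J`-dense in `E`,
i.e. all the sieves `S^{N(A) ⊔ N(N(A))}_(c,e)` are `J`-covering. -/
theorem statement11 (J : GrothendieckTopology C) :
    (∀ (c : C) (R : Sieve c), negSieve R ⊔ negSieve (negSieve R) ∈ J c) ↔
    (∀ (E : Cᵒᵖ ⥤ Type u) (A : Subfunctor E) (c : C) (e : E.obj (op c)),
      (unionSub E (negSub E A) (negSub E (negSub E A))).sieveOfSection e ∈ J c) := by
  constructor
  · intro h E A c e
    rw [unionSub_sieve, negSub_sieve, negSub_sieve, negSub_sieve]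
    exact h c _
  · intro h c R
    let A : Subfunctor (yoneda.obj c) := ⟨fun d => {f | R f}, fun i f hf => R.downward_closed hf _⟩
    have := h (yoneda.obj c) A c (𝟙 c)
    rw [unionSub_sieve, negSub_sieve, negSub_sieve, negSub_sieve] at this
    have hA : A.sieveOfSection (𝟙 c) = R := by
      ext d f
      show R (f ≫ 𝟙 c) ↔ R f
      simp
    rwa [hA] at this

end Stmt11
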